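/- Let G be a finite group, ℓ a prime, and suppose O_ℓ(Z(G)) = 1 (the center of G has order prime to ℓ). Let Δ be the simplicial complex of chains 1 = P₀ < P₁ < ⋯ < Pₙ of ℓ-subgroups of G starting at the trivial group, and Δ' the subcomplex of such chains with all Pᵢ abelian. Then, for any G-conjugation-stable integer-valued function f on subgroups of G, Σ_{σ ∈ Δ/G} (−1)^{|σ|} f(G_σ) = Σ_{ρ ∈ Δ'/G} (−1)^{|ρ|} f(G_ρ), where the sums run over G-orbit representatives of chains and G_σ is the chain stabilizer. -/

import Mathlib

open Pointwise

/-- The stabilizer in `G` of a chain of subgroups of `G` under the conjugation action,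
as a subgroup of `G` (via the identification `ConjAct G ≃* G`). -/
def chainStabilizer {G : Type*} [Group G] [DecidableEq (Subgroup G)]
    (σ : Finset (Subgroup G)) : Subgroup G :=
  Subgroup.map ConjAct.ofConjAct.toMonoidHom (MulAction.stabilizer (ConjAct G) σ)

private lemma mul_comm_of_subgroups_simple {Q : Type*} [Group Q]
    (h : ∀ H : Subgroup Q, H = ⊥ ∨ H = ⊤) (a b : Q) : a * b = b * a := by
  rcases h (Subgroup.zpowers a) with h1 | h1
  · have ha : a ∈ (⊥ : Subgroup Q) := h1 ▸ Subgroup.mem_zpowers a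
    rw [Subgroup.mem_bot] at ha
    rw [ha, one_mul, mul_one]
  · have hb : b ∈ Subgroup.zpowers a := h1 ▸ Subgroup.mem_top b
    obtain ⟨k, hk⟩ := Subgroup.mem_zpowers_iff.mp hb
    rw [← hk]
    exact ((Commute.refl a).zpow_right k).eq

open scoped commutatorElement in
private lemma commutator_le_coatom {P : Type*} [Group P] [Finite P]
    (hnil : Group.IsNilpotent P) {K : Subgroup P} (hK : IsCoatom K) : commutator P ≤ K := by
  have hnc : NormalizerCondition P := normalizerCondition_of_isNilpotent
  haveI hnorm : K.Normal := Subgroup.NormalizerCondition.normal_of_coatom K hnc hK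
  have hsur := QuotientGroup.mk'_surjective K
  have hsimple : ∀ H : Subgroup (P ⧸ K), H = ⊥ ∨ H = ⊤ := by
    intro H
    have hKle : K ≤ H.comap (QuotientGroup.mk' K) := by
      intro x hx
      simp only [Subgroup.mem_comap]
      have hx1 : QuotientGroup.mk' K x = 1 := (QuotientGroup.eq_one_iff x).mpr hx
      rw [hx1]; exact H.one_mem
    rcases eq_or_lt_of_le hKle with he | hl
    · left
      rw [← Subgroup.map_comap_eq_self_of_surjective hsur H, ← he]
      exact (Subgroup.map_eq_bot_iff _).mpr (le_of_eq (QuotientGroup.ker_mk' K).symm)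
    · right
      have htop : H.comap (QuotientGroup.mk' K) = ⊤ := hK.2 _ hl
      rw [← Subgroup.map_comap_eq_self_of_surjective hsur H, htop,
        Subgroup.map_top_of_surjective _ hsur]
  rw [commutator_def, Subgroup.commutator_le]
  intro g _ h _
  rw [← QuotientGroup.eq_one_iff]
  have : ((⁅g, h⁆ : P) : P ⧸ K) = ⁅((g : P) : P ⧸ K), ((h : P) : P ⧸ K)⁆ :=
    map_commutatorElement (QuotientGroup.mk' K) g h
  rw [this, commutatorElement_eq_one_iff_mul_comm]
  exact mul_comm_of_subgroups_simple hsimple _ _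

private lemma eq_top_of_sup_commutator {P : Type*} [Group P] [Finite P]
    (hnil : Group.IsNilpotent P) {H : Subgroup P} (h : H ⊔ commutator P = ⊤) : H = ⊤ := by
  apply frattini_nongenerating
  have hle : commutator P ≤ frattini P := by
    rw [frattini, Order.radical]
    exact le_iInf₂ fun K hK => commutator_le_coatom hnil hK
  exact top_unique (h ▸ sup_le_sup_left hle H)

/-- Frattini-type: in a finite `ℓ`-group `T`, a subgroup `H` with `⁅T,T⁆ ⊔ H = T` equals `T`. -/
private lemma eq_of_commutator_sup {G : Type*} [Group G] [Finite G] {ℓ : ℕ} (hℓ : ℓ.Prime)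
    {T H : Subgroup G} (hT : IsPGroup ℓ T) (hH : H ≤ T) (h : ⁅T, T⁆ ⊔ H = T) : H = T := by
  haveI : Fact ℓ.Prime := ⟨hℓ⟩
  have hnil : Group.IsNilpotent ↥T := hT.isNilpotent
  have hmapinj := Subgroup.map_injective (T.subtype_injective)
  have hmaptop : Subgroup.map T.subtype ⊤ = T := by
    rw [← MonoidHom.range_eq_map, Subgroup.range_subtype]
  have hcomm : Subgroup.map T.subtype (commutator ↥T) = ⁅T, T⁆ := by
    rw [commutator_def, Subgroup.map_commutator, hmaptop]
  have hH' : Subgroup.map T.subtype (H.subgroupOf T) = H := by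
    rw [Subgroup.subgroupOf_map_subtype, inf_eq_left.mpr hH]
  have htop : H.subgroupOf T ⊔ commutator ↥T = ⊤ := by
    apply hmapinj
    rw [Subgroup.map_sup, hH', hcomm, sup_comm, h, hmaptop]
  have := eq_top_of_sup_commutator hnil htop
  rw [← hH', this, hmaptop]

section ChainDefs

variable {G : Type*} [Group G]

open scoped Classical in
/-- The canonical subgroup used in the alternation construction: `⁅T,T⁆ ⊔ M` where `T` is the
top of the chain and `M` is the largest member not containing `⁅T,T⁆`. -/
private noncomputable def altK (σ : Finset (Subgroup G)) : Subgroup G :=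
  ⁅σ.sup id, σ.sup id⁆ ⊔ (σ.filter fun P => ¬ ⁅σ.sup id, σ.sup id⁆ ≤ P).sup id

/-- The alternation: add or remove `altK σ`. -/
private noncomputable def altChain [DecidableEq (Subgroup G)] (σ : Finset (Subgroup G)) :
    Finset (Subgroup G) :=
  if altK σ ∈ σ then σ.erase (altK σ) else insert (altK σ) σ

private lemma chain_sup_mem {σ : Finset (Subgroup G)}
    (hch : IsChain (· ≤ ·) (σ : Set (Subgroup G))) (hne : σ.Nonempty) : σ.sup id ∈ σ := by
  have h := Finset.sup'_mem (↑σ : Set (Subgroup G)) ?_ σ hne id (fun i hi => hi)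
  · rwa [Finset.sup'_eq_sup] at h
  · intro x hx y hy
    rcases hch.total hx hy with h | h
    · rw [sup_eq_right.mpr h]; exact hy
    · rw [sup_eq_left.mpr h]; exact hx

end ChainDefs

section ChainSpec

open scoped Classical

variable {G : Type*} [Group G] [Finite G] [DecidableEq (Subgroup G)]

private lemma altChain_spec {ℓ : ℕ} (hℓ : ℓ.Prime) {σ : Finset (Subgroup G)}
    (hbot : (⊥ : Subgroup G) ∈ σ) (hp : ∀ P ∈ σ, IsPGroup ℓ P)
    (hch : IsChain (· ≤ ·) (σ : Set (Subgroup G)))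
    (hna : ¬ ∀ P ∈ σ, ∀ a ∈ P, ∀ b ∈ P, a * b = b * a) :
    ((⊥ : Subgroup G) ∈ altChain σ ∧ (∀ P ∈ altChain σ, IsPGroup ℓ P) ∧
        IsChain (· ≤ ·) ((altChain σ : Set (Subgroup G))))
      ∧ (¬ ∀ P ∈ altChain σ, ∀ a ∈ P, ∀ b ∈ P, a * b = b * a)
      ∧ altChain (altChain σ) = σ
      ∧ ((altChain σ).card = σ.card + 1 ∨ σ.card = (altChain σ).card + 1) := by
  have hne : σ.Nonempty := ⟨⊥, hbot⟩
  set T := σ.sup id with hTdef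
  have hT : T ∈ σ := chain_sup_mem hch hne
  have hub : ∀ P ∈ σ, P ≤ T := fun P hP => Finset.le_sup (f := id) hP
  push_neg at hna
  obtain ⟨P₀, hP₀, a, ha, b, hb, hab⟩ := hna
  have haT : a ∈ T := hub P₀ hP₀ ha
  have hbT : b ∈ T := hub P₀ hP₀ hb
  set Q := ⁅T, T⁆ with hQdef
  have hQT : Q ≤ T := by
    rw [hQdef]
    refine Subgroup.commutator_le.mpr fun g1 h1 g2 h2 => ?_
    exact T.mul_mem (T.mul_mem (T.mul_mem h1 h2) (T.inv_mem h1)) (T.inv_mem h2)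
  have hQbot : Q ≠ ⊥ := by
    intro h
    apply hab
    have hle : ⁅T, T⁆ ≤ (⊥ : Subgroup G) := by rw [← hQdef, h]
    have h2 := Subgroup.commutator_le.mp hle a haT b hbT
    rwa [Subgroup.mem_bot, commutatorElement_eq_one_iff_mul_comm] at h2
  set D := σ.filter (fun P => ¬ Q ≤ P) with hDdef
  have hbotD : ⊥ ∈ D := Finset.mem_filter.mpr ⟨hbot, fun h => hQbot (le_bot_iff.mp h)⟩
  have hchD : IsChain (· ≤ ·) (D : Set (Subgroup G)) :=
    IsChain.mono (fun x hx => Finset.mem_coe.mpr (Finset.mem_of_mem_filter _ hx)) hch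
  set M := D.sup id with hMdef
  have hMD : M ∈ D := chain_sup_mem hchD ⟨⊥, hbotD⟩
  have hMσ : M ∈ σ := (Finset.mem_filter.mp hMD).1
  have hQM : ¬ Q ≤ M := (Finset.mem_filter.mp hMD).2
  have hMub : ∀ P ∈ D, P ≤ M := fun P hP => Finset.le_sup (f := id) hP
  have hKdef : altK σ = Q ⊔ M := rfl
  set K := altK σ with hK
  have hQK : Q ≤ K := hKdef ▸ le_sup_left
  have hMK : M ≤ K := hKdef ▸ le_sup_right
  have hMT : M ≤ T := hub M hMσ
  have hKT : K ≤ T := hKdef ▸ sup_le hQT hMT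
  have hKp : IsPGroup ℓ K := (hp T hT).to_le hKT
  have hKbot : K ≠ ⊥ := fun h => hQbot (le_bot_iff.mp (h ▸ hQK))
  have hKM : K ≠ M := fun h => hQM (h ▸ hQK)
  have hKle : ∀ P ∈ σ, Q ≤ P → K ≤ P := by
    intro P hP hQP
    have hMP : M ≤ P := by
      rcases hch.total (Finset.mem_coe.mpr hMσ) (Finset.mem_coe.mpr hP) with h | h
      · exact h
      · exact absurd (hQP.trans h) hQM
    exact hKdef ▸ sup_le hQP hMP
  have hcmp : ∀ P ∈ σ, P ≤ M ∨ K ≤ P := by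
    intro P hP
    by_cases hQP : Q ≤ P
    · exact Or.inr (hKle P hP hQP)
    · exact Or.inl (hMub P (Finset.mem_filter.mpr ⟨hP, hQP⟩))
  have hKT' : K ≠ T := by
    intro h
    have hMeq : M = T := eq_of_commutator_sup hℓ (hp T hT) hMT (by rw [← hQdef, ← hKdef, h])
    exact hQM (hMeq ▸ hQT)
  -- properties of the new chain
  by_cases hKσ : K ∈ σ
  · -- erase case
    have hσ' : altChain σ = σ.erase K := by rw [altChain, if_pos hKσ]
    have hTσ' : T ∈ σ.erase K := Finset.mem_erase.mpr ⟨fun h => hKT' h.symm, hT⟩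
    have hsub : σ.erase K ⊆ σ := Finset.erase_subset K σ
    have hsup' : (σ.erase K).sup id = T :=
      le_antisymm (Finset.sup_le fun P hP => hub P (hsub hP)) (Finset.le_sup (f := id) hTσ')
    have hfil' : (σ.erase K).filter (fun P => ¬ Q ≤ P) = D := by
      ext P
      simp only [hDdef, Finset.mem_filter, Finset.mem_erase]
      constructor
      · rintro ⟨⟨-, h1⟩, h2⟩; exact ⟨h1, h2⟩
      · rintro ⟨h1, h2⟩; exact ⟨⟨fun h => h2 (h ▸ hQK), h1⟩, h2⟩
    have haK' : altK (σ.erase K) = K := by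
      rw [altK, hsup', hfil', ← hQdef, ← hMdef, ← hKdef]
    refine ⟨⟨?_, ?_, ?_⟩, ?_, ?_, ?_⟩
    · rw [hσ']; exact Finset.mem_erase.mpr ⟨fun h => hKbot h.symm, hbot⟩
    · rw [hσ']; exact fun P hP => hp P (hsub hP)
    · rw [hσ']; exact IsChain.mono (fun x hx => hsub hx) hch
    · rw [hσ']; intro hall; exact hab (hall T hTσ' a haT b hbT)
    · rw [hσ', altChain, haK', if_neg (Finset.notMem_erase K σ), Finset.insert_erase hKσ]
    · right
      rw [hσ', Finset.card_erase_of_mem hKσ]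
      have hpos : 0 < σ.card := Finset.card_pos.mpr hne
      omega
  · -- insert case
    have hσ' : altChain σ = insert K σ := by rw [altChain, if_neg hKσ]
    have hsup' : (insert K σ).sup id = T := by
      rw [Finset.sup_insert]
      exact sup_eq_right.mpr hKT
    have hfil' : (insert K σ).filter (fun P => ¬ Q ≤ P) = D := by
      rw [Finset.filter_insert, if_neg (fun h => h hQK)]
    have haK' : altK (insert K σ) = K := by
      rw [altK, hsup', hfil', ← hQdef, ← hMdef, ← hKdef]
    refine ⟨⟨?_, ?_, ?_⟩, ?_, ?_, ?_⟩
    · rw [hσ']; exact Finset.mem_insert_of_mem hbot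
    · rw [hσ']
      intro P hP
      rcases Finset.mem_insert.mp hP with h | h
      · exact h ▸ hKp
      · exact hp P h
    · rw [hσ', Finset.coe_insert]
      refine hch.insert fun P hP hne' => ?_
      rcases hcmp P hP with h | h
      · exact Or.inr (h.trans hMK)
      · exact Or.inl h
    · rw [hσ']
      intro hall
      exact hab (hall T (Finset.mem_insert_of_mem hT) a haT b hbT)
    · rw [hσ', altChain, haK', if_pos (Finset.mem_insert_self K σ), Finset.erase_insert hKσ]
    · left
      rw [hσ', Finset.card_insert_of_notMem hKσ]

end ChainSpec

section Equivariance

open scoped Classical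

variable {G : Type*} [Group G]

private lemma sup_smul [DecidableEq (Subgroup G)] (g : ConjAct G) (σ : Finset (Subgroup G)) :
    (g • σ).sup id = g • σ.sup id := by
  classical
  rw [Finset.smul_finset_def, Finset.sup_image]
  have := Finset.comp_sup_eq_sup_comp (s := σ) (f := id) (g • · : Subgroup G → Subgroup G)
    (fun x y => Subgroup.smul_sup g x y) (Subgroup.smul_bot g)
  simpa [Function.comp] using this.symm

private lemma commutator_smul (g : ConjAct G) (H : Subgroup G) :
    g • (⁅H, H⁆ : Subgroup G) = ⁅g • H, g • H⁆ := by
  simp only [Subgroup.pointwise_smul_def]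
  exact Subgroup.map_commutator H H _

private lemma altK_smul [DecidableEq (Subgroup G)] (g : ConjAct G) (σ : Finset (Subgroup G)) :
    altK (g • σ) = g • altK σ := by
  classical
  have hfe : (g • σ).filter (fun P => ¬ (g • ⁅σ.sup id, σ.sup id⁆ : Subgroup G) ≤ P)
      = g • (σ.filter fun P => ¬ (⁅σ.sup id, σ.sup id⁆ : Subgroup G) ≤ P) := by
    ext P
    simp only [Finset.mem_filter, Finset.mem_smul_finset]
    constructor
    · rintro ⟨⟨P₀, hP₀, rfl⟩, hle⟩
      exact ⟨P₀, ⟨hP₀, fun h => hle (Subgroup.pointwise_smul_le_pointwise_smul_iff.mpr h)⟩, rfl⟩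
    · rintro ⟨P₀, ⟨hP₀, hle⟩, rfl⟩
      exact ⟨⟨P₀, hP₀, rfl⟩, fun h => hle (Subgroup.pointwise_smul_le_pointwise_smul_iff.mp h)⟩
  rw [altK, altK, sup_smul, ← commutator_smul, hfe, sup_smul, Subgroup.smul_sup]

private lemma altChain_smul [DecidableEq (Subgroup G)] (g : ConjAct G)
    (σ : Finset (Subgroup G)) : altChain (g • σ) = g • altChain σ := by
  classical
  rw [altChain, altChain, altK_smul]
  by_cases h : altK σ ∈ σ
  · rw [if_pos ((Finset.smul_mem_smul_finset_iff g).mpr h), if_pos h,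
      Finset.smul_finset_def, Finset.smul_finset_def,
      Finset.image_erase (MulAction.injective g)]
  · rw [if_neg (fun hc => h ((Finset.smul_mem_smul_finset_iff g).mp hc)), if_neg h,
      Finset.smul_finset_insert]

private lemma stabilizer_altChain [DecidableEq (Subgroup G)] {σ : Finset (Subgroup G)}
    (hinv : altChain (altChain σ) = σ) :
    MulAction.stabilizer (ConjAct G) (altChain σ) = MulAction.stabilizer (ConjAct G) σ := by
  ext g
  simp only [MulAction.mem_stabilizer_iff]
  constructor
  · intro h
    calc g • σ = g • altChain (altChain σ) := by rw [hinv]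
    _ = altChain (g • altChain σ) := (altChain_smul g (altChain σ)).symm
    _ = altChain (altChain σ) := by rw [h]
    _ = σ := hinv
  · intro h
    rw [← altChain_smul, h]

private lemma chainStabilizer_smul [DecidableEq (Subgroup G)] (g : ConjAct G)
    (σ : Finset (Subgroup G)) :
    chainStabilizer (g • σ)
      = Subgroup.map (MulAut.conj (ConjAct.ofConjAct g)).toMonoidHom (chainStabilizer σ) := by
  rw [chainStabilizer, chainStabilizer, MulAction.stabilizer_smul_eq_stabilizer_map_conj,
    Subgroup.map_map, Subgroup.map_map]
  refine congrArg (fun h => Subgroup.map h _) ?_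
  ext x
  simp [MulAut.conj_apply]

end Equivariance

section Stability

variable {G : Type*} [Group G]

private lemma good_smul [DecidableEq (Subgroup G)] {ℓ : ℕ} (g : ConjAct G)
    {σ : Finset (Subgroup G)}
    (h : (⊥ : Subgroup G) ∈ σ ∧ (∀ P ∈ σ, IsPGroup ℓ P)
      ∧ IsChain (· ≤ ·) (σ : Set (Subgroup G))) :
    (⊥ : Subgroup G) ∈ g • σ ∧ (∀ P ∈ g • σ, IsPGroup ℓ P)
      ∧ IsChain (· ≤ ·) ((g • σ : Finset (Subgroup G)) : Set (Subgroup G)) := by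
  obtain ⟨h1, h2, h3⟩ := h
  refine ⟨?_, ?_, ?_⟩
  · exact Finset.mem_smul_finset.mpr ⟨⊥, h1, Subgroup.smul_bot g⟩
  · intro P hP
    obtain ⟨P₀, hP₀, rfl⟩ := Finset.mem_smul_finset.mp hP
    rw [Subgroup.pointwise_smul_def]
    exact (h2 P₀ hP₀).map _
  · intro x hx y hy hxy
    obtain ⟨x₀, hx₀, rfl⟩ := Finset.mem_smul_finset.mp hx
    obtain ⟨y₀, hy₀, rfl⟩ := Finset.mem_smul_finset.mp hy
    have hne : x₀ ≠ y₀ := fun h => hxy (by rw [h])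
    rcases h3 (Finset.mem_coe.mpr hx₀) (Finset.mem_coe.mpr hy₀) hne with h | h
    · exact Or.inl (Subgroup.pointwise_smul_le_pointwise_smul_iff.mpr h)
    · exact Or.inr (Subgroup.pointwise_smul_le_pointwise_smul_iff.mpr h)

private lemma abel_smul [DecidableEq (Subgroup G)] (g : ConjAct G)
    {σ : Finset (Subgroup G)}
    (h : ∀ P ∈ σ, ∀ a ∈ P, ∀ b ∈ P, a * b = b * a) :
    ∀ P ∈ g • σ, ∀ a ∈ P, ∀ b ∈ P, a * b = b * a := by
  intro P hP a ha b hb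
  obtain ⟨P₀, hP₀, rfl⟩ := Finset.mem_smul_finset.mp hP
  obtain ⟨x, hx, rfl⟩ := (Subgroup.mem_smul_pointwise_iff_exists a g P₀).mp ha
  obtain ⟨y, hy, rfl⟩ := (Subgroup.mem_smul_pointwise_iff_exists b g P₀).mp hb
  rw [← smul_mul', ← smul_mul', h P₀ hP₀ x hx y hy]

end Stability

/-- Let `G` be a finite group, `ℓ` a prime with `ℓ ∤ |Z(G)|`, `Δ` the complex of chains
`1 = P₀ < ⋯ < Pₙ` of `ℓ`-subgroups of `G` starting at the trivial subgroup, and `Δ'`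
the subcomplex of chains all of whose terms are abelian.  Then, for any integer-valued
conjugation-stable function `f` on subgroups of `G`, the alternating sums of
`f(G_σ)` over `G`-orbit representatives of chains of `Δ` and of `Δ'` coincide. -/
theorem stmt_11 {G : Type*} [Group G] [Finite G] [DecidableEq (Subgroup G)]
    (ℓ : ℕ) (hℓ : ℓ.Prime)
    (hcenter : ¬ ℓ ∣ Nat.card (Subgroup.center G))
    (Δ Δ' : Finset (Finset (Subgroup G)))
    (hΔ : ∀ σ : Finset (Subgroup G), σ ∈ Δ ↔
      ((⊥ : Subgroup G) ∈ σ ∧ (∀ P ∈ σ, IsPGroup ℓ P) ∧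
        IsChain (· ≤ ·) (σ : Set (Subgroup G))))
    (hΔ' : ∀ σ : Finset (Subgroup G), σ ∈ Δ' ↔
      (σ ∈ Δ ∧ ∀ P ∈ σ, ∀ a ∈ P, ∀ b ∈ P, a * b = b * a))
    (f : Subgroup G → ℤ)
    (hf : ∀ (g : G) (H : Subgroup G), f (Subgroup.map (MulAut.conj g).toMonoidHom H) = f H)
    (R R' : Finset (Finset (Subgroup G))) (hR : R ⊆ Δ) (hR' : R' ⊆ Δ')
    (hRrep : ∀ σ ∈ Δ, ∃! ρ, ρ ∈ R ∧ ∃ g : ConjAct G, g • σ = ρ)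
    (hR'rep : ∀ σ ∈ Δ', ∃! ρ, ρ ∈ R' ∧ ∃ g : ConjAct G, g • σ = ρ) :
    ∑ σ ∈ R, (-1 : ℤ) ^ (σ.card - 1) * f (chainStabilizer σ)
      = ∑ σ ∈ R', (-1 : ℤ) ^ (σ.card - 1) * f (chainStabilizer σ) := by
  classical
  have hΔ'Δ : Δ' ⊆ Δ := fun σ hσ => ((hΔ' σ).mp hσ).1
  have hstabΔ : ∀ (g : ConjAct G), ∀ σ ∈ Δ, g • σ ∈ Δ := by
    intro g σ hσ
    exact (hΔ _).mpr (good_smul g ((hΔ σ).mp hσ))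
  have hstabΔ' : ∀ (g : ConjAct G), ∀ σ ∈ Δ', g • σ ∈ Δ' := by
    intro g σ hσ
    obtain ⟨h1, h2⟩ := (hΔ' σ).mp hσ
    exact (hΔ' _).mpr ⟨hstabΔ g σ h1, abel_smul g h2⟩
  set t : Finset (Subgroup G) → ℤ :=
    fun σ => (-1 : ℤ) ^ (σ.card - 1) * f (chainStabilizer σ) with htdef
  have htconst : ∀ (g : ConjAct G) (σ : Finset (Subgroup G)), t (g • σ) = t σ := by
    intro g σ
    simp only [htdef]
    rw [Finset.card_smul_finset, chainStabilizer_smul, hf]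
  set orb : Finset (Subgroup G) → Finset (Finset (Subgroup G)) :=
    fun σ => Δ.filter (fun τ => ∃ g : ConjAct G, g • σ = τ) with horbdef
  have horbcongr : ∀ σ τ : Finset (Subgroup G),
      (∃ g : ConjAct G, g • σ = τ) → orb τ = orb σ := by
    rintro σ τ ⟨g, hg⟩
    simp only [horbdef]
    apply Finset.filter_congr
    intro ρ _
    constructor
    · rintro ⟨h, hh⟩; exact ⟨h * g, by rw [mul_smul, hg, hh]⟩
    · rintro ⟨h, hh⟩; exact ⟨h * g⁻¹, by rw [mul_smul, ← hg, inv_smul_smul, hh]⟩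
  set u : Finset (Subgroup G) → ℚ := fun σ => (t σ : ℚ) / ((orb σ).card : ℚ) with hudef
  have key : ∀ S RS : Finset (Finset (Subgroup G)), RS ⊆ S →
      (∀ σ ∈ S, ∃! ρ, ρ ∈ RS ∧ ∃ g : ConjAct G, g • σ = ρ) →
      (∀ σ ∈ S, orb σ = S.filter (fun τ => ∃ g : ConjAct G, g • σ = τ)) →
      ∑ σ ∈ S, u σ = ∑ ρ ∈ RS, (t ρ : ℚ) := by
    intro S RS hsub hrep horbS
    have hrepfun : ∀ σ ∈ S, ∃ ρ, ρ ∈ RS ∧ ∃ g : ConjAct G, g • σ = ρ :=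
      fun σ h => (hrep σ h).exists
    set r : Finset (Subgroup G) → Finset (Subgroup G) := fun σ =>
      if h : σ ∈ S then (hrepfun σ h).choose else ∅ with hrdef
    have hr1 : ∀ σ (h : σ ∈ S), r σ ∈ RS ∧ ∃ g : ConjAct G, g • σ = r σ := by
      intro σ h
      simp only [hrdef, dif_pos h]
      exact (hrepfun σ h).choose_spec
    have hr2 : ∀ σ (h : σ ∈ S), ∀ ρ, ρ ∈ RS → (∃ g : ConjAct G, g • σ = ρ) → ρ = r σ := by
      intro σ h ρ h1 h2
      obtain ⟨ρ', hρ', huniq⟩ := hrep σ h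
      exact (huniq ρ ⟨h1, h2⟩).trans (huniq (r σ) (hr1 σ h)).symm
    rw [← Finset.sum_fiberwise_of_maps_to (g := r) (fun σ h => (hr1 σ h).1) u]
    refine Finset.sum_congr rfl fun ρ hρ => ?_
    have hfib : S.filter (fun σ => r σ = ρ)
        = S.filter (fun τ => ∃ g : ConjAct G, g • ρ = τ) := by
      apply Finset.filter_congr
      intro τ hτ
      constructor
      · intro h
        obtain ⟨g, hg⟩ := (hr1 τ hτ).2
        exact ⟨g⁻¹, by rw [← h, ← hg, inv_smul_smul]⟩
      · rintro ⟨g, hg⟩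
        exact ((hr2 τ hτ ρ hρ ⟨g⁻¹, by rw [← hg, inv_smul_smul]⟩)).symm
    rw [hfib]
    have hρS : ρ ∈ S := hsub hρ
    have hcard : (S.filter (fun τ => ∃ g : ConjAct G, g • ρ = τ)).card = (orb ρ).card := by
      rw [horbS ρ hρS]
    have hmemρ : ρ ∈ S.filter (fun τ => ∃ g : ConjAct G, g • ρ = τ) :=
      Finset.mem_filter.mpr ⟨hρS, 1, one_smul _ _⟩
    have hpos : ((orb ρ).card : ℚ) ≠ 0 := by
      rw [← hcard]
      exact Nat.cast_ne_zero.mpr (Finset.card_pos.mpr ⟨ρ, hmemρ⟩).ne'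
    have huval : ∀ τ ∈ S.filter (fun τ => ∃ g : ConjAct G, g • ρ = τ),
        u τ = (t ρ : ℚ) / ((orb ρ).card : ℚ) := by
      intro τ hτ
      obtain ⟨hτS, g, hg⟩ := Finset.mem_filter.mp hτ
      simp only [hudef]
      rw [horbcongr ρ τ ⟨g, hg⟩, ← hg, htconst]
    rw [Finset.sum_congr rfl huval, Finset.sum_const, hcard, nsmul_eq_mul,
      mul_div_cancel₀ _ hpos]
  have horbΔ : ∀ σ ∈ Δ, orb σ = Δ.filter (fun τ => ∃ g : ConjAct G, g • σ = τ) :=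
    fun σ _ => rfl
  have horbΔ' : ∀ σ ∈ Δ', orb σ = Δ'.filter (fun τ => ∃ g : ConjAct G, g • σ = τ) := by
    intro σ hσ
    simp only [horbdef]
    ext τ
    simp only [Finset.mem_filter]
    constructor
    · rintro ⟨hτΔ, g, rfl⟩; exact ⟨hstabΔ' g σ hσ, g, rfl⟩
    · rintro ⟨hτΔ', hg⟩; exact ⟨hΔ'Δ hτΔ', hg⟩
  have hA : ∑ σ ∈ Δ, u σ = ∑ ρ ∈ R, (t ρ : ℚ) := key Δ R hR hRrep horbΔ
  have hB : ∑ σ ∈ Δ', u σ = ∑ ρ ∈ R', (t ρ : ℚ) := key Δ' R' hR' hR'rep horbΔ'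
  have hmem : ∀ σ ∈ Δ \ Δ',
      ((⊥ : Subgroup G) ∈ σ ∧ (∀ P ∈ σ, IsPGroup ℓ P)
        ∧ IsChain (· ≤ ·) (σ : Set (Subgroup G)))
      ∧ ¬ (∀ P ∈ σ, ∀ a ∈ P, ∀ b ∈ P, a * b = b * a) := by
    intro σ hσ
    obtain ⟨h1, h2⟩ := Finset.mem_sdiff.mp hσ
    exact ⟨(hΔ σ).mp h1, fun hab => h2 ((hΔ' σ).mpr ⟨h1, hab⟩)⟩
  have hmemalt : ∀ σ ∈ Δ \ Δ', altChain σ ∈ Δ \ Δ' := by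
    intro σ hσ
    obtain ⟨⟨h1, h2, h3⟩, h4⟩ := hmem σ hσ
    obtain ⟨hg, hna, -, -⟩ := altChain_spec hℓ h1 h2 h3 h4
    exact Finset.mem_sdiff.mpr ⟨(hΔ _).mpr hg, fun h => hna ((hΔ' _).mp h).2⟩
  have hC : ∑ σ ∈ Δ \ Δ', u σ = 0 := by
    refine Finset.sum_involution (fun σ _ => altChain σ) ?_ ?_ (fun σ h => hmemalt σ h) ?_
    · intro σ hσ
      obtain ⟨⟨h1, h2, h3⟩, h4⟩ := hmem σ hσ
      obtain ⟨hg, hna, hinv, hcard⟩ := altChain_spec hℓ h1 h2 h3 h4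
      have hstab : chainStabilizer (altChain σ) = chainStabilizer σ := by
        rw [chainStabilizer, chainStabilizer, stabilizer_altChain hinv]
      have hb1 : 0 < σ.card := Finset.card_pos.mpr ⟨⊥, h1⟩
      have hb2 : 0 < (altChain σ).card := Finset.card_pos.mpr ⟨⊥, hg.1⟩
      have hsign : (-1 : ℤ) ^ ((altChain σ).card - 1) = -(-1 : ℤ) ^ (σ.card - 1) := by
        have key : ∀ m n : ℕ, 0 < m → n = m + 1 →
            (-1 : ℤ) ^ (n - 1) = -(-1 : ℤ) ^ (m - 1) := by
          intro m n hm hn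
          subst hn
          obtain ⟨k, rfl⟩ := Nat.exists_eq_add_of_lt hm
          have e1 : 0 + k + 1 + 1 - 1 = k + 1 := by omega
          have e2 : 0 + k + 1 - 1 = k := by omega
          rw [e1, e2, pow_succ]
          ring
        rcases hcard with h | h
        · exact key σ.card (altChain σ).card hb1 h
        · have := key (altChain σ).card σ.card hb2 h
          rw [this]; ring
      have hteq : t (altChain σ) = -t σ := by
        simp only [htdef]
        rw [hstab, hsign]
        ring
      have horbeq : (orb (altChain σ)).card = (orb σ).card := by
        have hmm : ∀ τ ∈ Δ \ Δ', ∀ g : ConjAct G, g • τ ∈ Δ \ Δ' := by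
          intro τ hτ g
          obtain ⟨ha, hb⟩ := Finset.mem_sdiff.mp hτ
          refine Finset.mem_sdiff.mpr ⟨hstabΔ g τ ha, fun hcon => hb ?_⟩
          have := hstabΔ' g⁻¹ _ hcon
          rwa [inv_smul_smul] at this
        refine Finset.card_nbij' (fun τ => altChain τ) (fun τ => altChain τ) ?_ ?_ ?_ ?_
        · intro τ hτ
          simp only [horbdef, Finset.mem_coe, Finset.mem_filter] at hτ ⊢
          obtain ⟨hτΔ, g, hgτ⟩ := hτ
          have hτsd : τ ∈ Δ \ Δ' := by
            rw [← hgτ]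
            exact hmm (altChain σ) (hmemalt σ hσ) g
          refine ⟨(Finset.mem_sdiff.mp (hmemalt τ hτsd)).1, g, ?_⟩
          rw [← hgτ, altChain_smul, hinv]
        · intro τ hτ
          simp only [horbdef, Finset.mem_coe, Finset.mem_filter] at hτ ⊢
          obtain ⟨hτΔ, g, hgτ⟩ := hτ
          have hτsd : τ ∈ Δ \ Δ' := by
            rw [← hgτ]
            exact hmm σ hσ g
          refine ⟨(Finset.mem_sdiff.mp (hmemalt τ hτsd)).1, g, ?_⟩
          rw [← hgτ, altChain_smul]
        · intro τ hτ
          simp only [horbdef, Finset.mem_coe, Finset.mem_filter] at hτ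
          obtain ⟨hτΔ, g, hgτ⟩ := hτ
          have hτsd : τ ∈ Δ \ Δ' := by
            rw [← hgτ]
            exact hmm (altChain σ) (hmemalt σ hσ) g
          obtain ⟨⟨k1, k2, k3⟩, k4⟩ := hmem τ hτsd
          exact (altChain_spec hℓ k1 k2 k3 k4).2.2.1
        · intro τ hτ
          simp only [horbdef, Finset.mem_coe, Finset.mem_filter] at hτ
          obtain ⟨hτΔ, g, hgτ⟩ := hτ
          have hτsd : τ ∈ Δ \ Δ' := by
            rw [← hgτ]
            exact hmm σ hσ g
          obtain ⟨⟨k1, k2, k3⟩, k4⟩ := hmem τ hτsd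
          exact (altChain_spec hℓ k1 k2 k3 k4).2.2.1
      simp only [hudef]
      rw [hteq, horbeq]
      push_cast
      ring
    · intro σ hσ _ heq
      obtain ⟨⟨h1, h2, h3⟩, h4⟩ := hmem σ hσ
      obtain ⟨-, -, -, hcard⟩ := altChain_spec hℓ h1 h2 h3 h4
      have heq' : altChain σ = σ := heq
      rw [heq'] at hcard
      omega
    · intro σ hσ
      obtain ⟨⟨h1, h2, h3⟩, h4⟩ := hmem σ hσ
      exact (altChain_spec hℓ h1 h2 h3 h4).2.2.1
  have hsplit : ∑ σ ∈ Δ, u σ = ∑ σ ∈ Δ', u σ := by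
    rw [← Finset.sum_sdiff hΔ'Δ (f := u), hC, zero_add]
  have hQ : (∑ ρ ∈ R, (t ρ : ℚ)) = ∑ ρ ∈ R', (t ρ : ℚ) := by
    rw [← hA, ← hB, hsplit]
  have hZ : ∑ σ ∈ R, t σ = ∑ σ ∈ R', t σ := by exact_mod_cast hQ
  simpa only [htdef] using hZ
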